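/- Let H be a graph with dom(H) ≥ u, let c be a u-clique of a graph G consisting of vertices that are common neighbors of each other, and let N(c) be the set of common neighbors of the vertices of c. Then the number of subgraphs J of G isomorphic to H with c contained in the set of dominating vertices of J equals N(H^{↓u}, G[N(c)]), the number of subgraphs of the induced subgraph G[N(c)] isomorphic to H with u dominating vertices removed. -/

import Mathlib

open SimpleGraph Finset Filter Topology

/-- `F` is contained in `G` as a subgraph: there is an injective graph homomorphism. -/
def Graph.Contains {β α : Type*} (F : SimpleGraph β) (G : SimpleGraph α) : Prop :=
  ∃ f : F →g G, Function.Injective f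

/-- The number of subgraphs of `G` isomorphic to `H`. -/
noncomputable def copyCount {β α : Type*} (H : SimpleGraph β) (G : SimpleGraph α) : ℕ :=
  {J : G.Subgraph | Nonempty (J.coe ≃g H)}.ncard

/-- The number of `u`-cliques of `G`. -/
noncomputable def kclique {α : Type*} (u : ℕ) (G : SimpleGraph α) : ℕ :=
  {s : Finset α | G.IsNClique u s}.ncard

/-- The set of dominating vertices of a graph. -/
def domSet {α : Type*} (H : SimpleGraph α) : Set α := {v | ∀ w, w ≠ v → H.Adj v w}

/-- The number of dominating vertices of a graph. -/
noncomputable def domCount {α : Type*} (H : SimpleGraph α) : ℕ := (domSet H).ncard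

/-- The set of dominating vertices of a subgraph `J`: vertices of `J` adjacent in `J`
to all other vertices of `J`. -/
def subDomSet {α : Type*} {G : SimpleGraph α} (J : G.Subgraph) : Set α :=
  {v ∈ J.verts | ∀ w ∈ J.verts, w ≠ v → J.Adj v w}

/-- The common neighborhood of a finite vertex set `c` in `G`. -/
def commonNbhd {α : Type*} (G : SimpleGraph α) (c : Finset α) : Set α :=
  {v | ∀ x ∈ c, G.Adj x v}

/-- `ω(c)`: the size of a largest clique of `G` containing `c`. -/
noncomputable def omegaC {α : Type*} (G : SimpleGraph α) (c : Finset α) : ℕ :=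
  sSup {m | ∃ s : Finset α, c ⊆ s ∧ G.IsNClique m s}

/-- `Δ(c)`: the number of common neighbors of `c` in `G`. -/
noncomputable def deltaC {α : Type*} (G : SimpleGraph α) (c : Finset α) : ℕ :=
  (commonNbhd G c).ncard

/-- `ω(J)`: the max of `ω(c)` over `u`-sets `c` of dominating vertices of the subgraph `J`. -/
noncomputable def omegaJ {α : Type*} (G : SimpleGraph α) (u : ℕ) (J : G.Subgraph) : ℕ :=
  sSup {m | ∃ c : Finset α, ↑c ⊆ subDomSet J ∧ c.card = u ∧ m = omegaC G c}

/-- `Δ(J)`: the max of `Δ(c)` over `u`-sets `c` of dominating vertices of the subgraph `J`. -/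
noncomputable def deltaJ {α : Type*} (G : SimpleGraph α) (u : ℕ) (J : G.Subgraph) : ℕ :=
  sSup {m | ∃ c : Finset α, ↑c ⊆ subDomSet J ∧ c.card = u ∧ m = deltaC G c}

/-- The complete split graph `K_u ∨ I_d`. -/
def completeSplitGraph (u d : ℕ) : SimpleGraph (Fin u ⊕ Fin d) where
  Adj x y := x ≠ y ∧ (x.isLeft ∨ y.isLeft)
  symm := by constructor; rintro x y ⟨h1, h2⟩; exact ⟨h1.symm, h2.symm⟩
  loopless := by constructor; rintro x ⟨h, -⟩; exact h rfl

/-- Disjoint union of a family of graphs. -/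
def sigmaGraph {ι : Type*} {β : ι → Type*} (G : ∀ i, SimpleGraph (β i)) :
    SimpleGraph (Σ i, β i) where
  Adj x y := ∃ (i : ι) (a b : β i), x = ⟨i, a⟩ ∧ y = ⟨i, b⟩ ∧ (G i).Adj a b
  symm := by constructor; rintro x y ⟨i, a, b, rfl, rfl, hab⟩; exact ⟨i, b, a, rfl, rfl, hab.symm⟩
  loopless := by
    constructor
    rintro x ⟨i, a, b, rfl, h2, hab⟩
    injection h2 with h1 h2'
    exact hab.ne h2'

/-- `ex_u(p, H, F)`: maximum number of copies of `H` in an `F`-free graph with exactly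
`p` `u`-cliques (graphs taken on `Fin n` for some `n`). -/
noncomputable def exu {ι : Type*} {β : ι → Type*} (u p : ℕ) {h : ℕ} (H : SimpleGraph (Fin h))
    (F : ∀ i, SimpleGraph (β i)) : ℕ :=
  sSup {N | ∃ (n : ℕ) (G : SimpleGraph (Fin n)),
    (∀ i, ¬ Graph.Contains (F i) G) ∧ kclique u G = p ∧ _root_.copyCount H G = N}


section Aux

variable {V : Type*} {G : SimpleGraph V} {c : Finset V}

lemma domSet_adj_iff {α : Type*} {H : SimpleGraph α} {v : α} (hv : v ∈ domSet H) (w : α) :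
    H.Adj v w ↔ w ≠ v :=
  ⟨fun h' => h'.ne', fun h' => hv w h'⟩

lemma mem_commonNbhd_of_dom {J : G.Subgraph} (hJc : ↑c ⊆ subDomSet J)
    {v : V} (hv : v ∈ J.verts) (hvc : v ∉ c) : v ∈ commonNbhd G c := by
  intro x hx
  have hd := hJc hx
  exact J.adj_sub (hd.2 v hv (by rintro rfl; exact hvc hx))

lemma not_mem_c_of_mem_commonNbhd {x : V} (hx : x ∈ commonNbhd G c) : x ∉ c :=
  fun h' => G.loopless.irrefl x (hx x h')

lemma mem_image_subtype {s : Set V} {T : Set ↥s} {x : V} (hx : x ∈ Subtype.val '' T)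
    (hS : x ∈ s) : (⟨x, hS⟩ : ↥s) ∈ T := by
  obtain ⟨z, hz, rfl⟩ := hx
  rwa [Subtype.coe_eta]

/-- Deleting the vertices of `c` from a subgraph of `G`, landing in `G[N(c)]`. -/
def phiSub (G : SimpleGraph V) (c : Finset V) (J : G.Subgraph) :
    (G.induce (commonNbhd G c)).Subgraph where
  verts := {v | ↑v ∈ J.verts ∧ ↑v ∉ c}
  Adj x y := J.Adj ↑x ↑y ∧ ↑x ∉ c ∧ ↑y ∉ c
  adj_sub h' := J.adj_sub h'.1
  edge_vert h' := ⟨J.edge_vert h'.1, h'.2.1⟩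
  symm := ⟨fun x y h' => ⟨h'.1.symm, h'.2.2, h'.2.1⟩⟩

/-- Adding back the clique `c` to a subgraph of `G[N(c)]`. -/
def psiSub (G : SimpleGraph V) (c : Finset V) (hc : G.IsClique (↑c : Set V))
    (J' : (G.induce (commonNbhd G c)).Subgraph) : G.Subgraph where
  verts := ↑c ∪ Subtype.val '' J'.verts
  Adj a b := a ≠ b ∧ a ∈ (↑c ∪ Subtype.val '' J'.verts : Set V) ∧
      b ∈ (↑c ∪ Subtype.val '' J'.verts : Set V) ∧
      (a ∈ c ∨ b ∈ c ∨ ∃ (ha : a ∈ commonNbhd G c) (hb : b ∈ commonNbhd G c),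
        J'.Adj ⟨a, ha⟩ ⟨b, hb⟩)
  adj_sub := by
    rintro a b ⟨hne, hav, hbv, (hac | hbc | ⟨ha, hb, hadj⟩)⟩
    · rcases hbv with hbc | ⟨z, hz, rfl⟩
      · exact hc hac hbc hne
      · exact z.2 a hac
    · rcases hav with hac | ⟨z, hz, rfl⟩
      · exact hc hac hbc hne
      · exact (z.2 b hbc).symm
    · exact J'.adj_sub hadj
  edge_vert := by rintro a b ⟨hne, hav, hbv, _⟩; exact hav
  symm := by
    constructor
    rintro a b ⟨hne, hav, hbv, hd⟩
    refine ⟨hne.symm, hbv, hav, ?_⟩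
    rcases hd with h1 | h1 | ⟨ha, hb, hadj⟩
    · exact Or.inr (Or.inl h1)
    · exact Or.inl h1
    · exact Or.inr (Or.inr ⟨hb, ha, hadj.symm⟩)

noncomputable def sdiffMapFun {n : ℕ} (E D : Finset (Fin n)) (e : ↥(D \ E) ≃ ↥(E \ D))
    (x : ((↑E : Set (Fin n))ᶜ : Set (Fin n))) : ((↑D : Set (Fin n))ᶜ : Set (Fin n)) :=
  if hx : (↑x : Fin n) ∈ D then
    ⟨↑(e ⟨↑x, Finset.mem_sdiff.2 ⟨hx, x.2⟩⟩),
      (Finset.mem_sdiff.1 (e _).2).2⟩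
  else ⟨↑x, hx⟩

lemma sdiffMapFun_coe_of_not_mem {n : ℕ} (E D : Finset (Fin n)) (e : ↥(D \ E) ≃ ↥(E \ D))
    (x : ((↑E : Set (Fin n))ᶜ : Set (Fin n))) (hx : (↑x : Fin n) ∉ D) : (↑(sdiffMapFun E D e x) : Fin n) = ↑x := by
  simp [sdiffMapFun, dif_neg hx]

lemma sdiffMapFun_mem_of_mem {n : ℕ} (E D : Finset (Fin n)) (e : ↥(D \ E) ≃ ↥(E \ D))
    (x : ((↑E : Set (Fin n))ᶜ : Set (Fin n))) (hx : (↑x : Fin n) ∈ D) : (↑(sdiffMapFun E D e x) : Fin n) ∈ E := by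
  simp only [sdiffMapFun, dif_pos hx]
  exact (Finset.mem_sdiff.1 (e _).2).1

lemma sdiffMapFun_leftInv {n : ℕ} (E D : Finset (Fin n)) (e : ↥(D \ E) ≃ ↥(E \ D)) :
    ∀ x, sdiffMapFun D E e.symm (sdiffMapFun E D e x) = x := by
  intro x
  by_cases hx : (↑x : Fin n) ∈ D
  · simp only [sdiffMapFun, dif_pos hx]
    split
    next h2 => apply Subtype.ext; simp
    next h2 => exact absurd (Finset.mem_sdiff.1 (e _).2).1 h2
  · simp only [sdiffMapFun, dif_neg hx]
    split
    next h2 => exact absurd h2 x.2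
    next h2 => exact Subtype.ext rfl

noncomputable def sdiffEquiv {n : ℕ} (E D : Finset (Fin n)) (e : ↥(D \ E) ≃ ↥(E \ D)) :
    ((↑E : Set (Fin n))ᶜ : Set (Fin n)) ≃ ((↑D : Set (Fin n))ᶜ : Set (Fin n)) where
  toFun := sdiffMapFun E D e
  invFun := sdiffMapFun D E e.symm
  left_inv := sdiffMapFun_leftInv E D e
  right_inv := by
    intro x
    have h := sdiffMapFun_leftInv D E e.symm x
    rwa [Equiv.symm_symm] at h

lemma deletion_iso {n : ℕ} (H : SimpleGraph (Fin n)) (E D : Finset (Fin n))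
    (hE : ↑E ⊆ domSet H) (hD : ↑D ⊆ domSet H) (hcard : E.card = D.card) :
    Nonempty (H.induce ((↑E : Set (Fin n))ᶜ) ≃g H.induce ((↑D : Set (Fin n))ᶜ)) := by
  have hcard' : (D \ E).card = (E \ D).card := Finset.card_sdiff_comm hcard.symm
  let e : ↥(D \ E) ≃ ↥(E \ D) := Finset.equivOfCardEq hcard'
  refine ⟨⟨sdiffEquiv E D e, ?_⟩⟩
  intro a b
  show H.Adj ↑(sdiffMapFun E D e a) ↑(sdiffMapFun E D e b) ↔ H.Adj ↑a ↑b
  have hinj : ∀ x y, sdiffMapFun E D e x = sdiffMapFun E D e y → x = y :=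
    fun x y hxy => (sdiffEquiv E D e).injective hxy
  by_cases ha : (↑a : Fin n) ∈ D
  · have hd1 : (↑a : Fin n) ∈ domSet H := hD ha
    have hd2 : (↑(sdiffMapFun E D e a) : Fin n) ∈ domSet H :=
      hE (sdiffMapFun_mem_of_mem E D e a ha)
    rw [domSet_adj_iff hd2, domSet_adj_iff hd1]
    constructor
    · intro hne heq
      exact hne (congrArg Subtype.val (congrArg (sdiffMapFun E D e) (Subtype.ext heq)))
    · intro hne heq
      exact hne (congrArg Subtype.val (hinj b a (Subtype.ext heq)))
  · by_cases hb : (↑b : Fin n) ∈ D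
    · have hd1 : (↑b : Fin n) ∈ domSet H := hD hb
      have hd2 : (↑(sdiffMapFun E D e b) : Fin n) ∈ domSet H :=
        hE (sdiffMapFun_mem_of_mem E D e b hb)
      rw [SimpleGraph.adj_comm, domSet_adj_iff hd2, H.adj_comm, domSet_adj_iff hd1]
      constructor
      · intro hne heq
        exact hne (congrArg Subtype.val (congrArg (sdiffMapFun E D e) (Subtype.ext heq)))
      · intro hne heq
        exact hne (congrArg Subtype.val (hinj a b (Subtype.ext heq)))
    · rw [sdiffMapFun_coe_of_not_mem E D e a ha, sdiffMapFun_coe_of_not_mem E D e b hb]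

lemma phi_iso {n : ℕ} {H : SimpleGraph (Fin n)} {J : G.Subgraph}
    (hJc : ↑c ⊆ subDomSet J) (e : J.coe ≃g H) :
    ∃ E : Finset (Fin n), ↑E ⊆ domSet H ∧ E.card = c.card ∧
      Nonempty ((phiSub G c J).coe ≃g H.induce ((↑E : Set (Fin n))ᶜ)) := by
  classical
  have hvc : ∀ x ∈ c, x ∈ J.verts := fun x hx => (hJc hx).1
  have hinj0 : Function.Injective (fun x : {x // x ∈ c} => e ⟨x.1, hvc x.1 x.2⟩) := by
    intro x y hxy
    have h1 := e.injective hxy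
    exact Subtype.ext (congrArg (fun t : ↥J.verts => (t : V)) h1)
  set E := c.attach.image (fun x : {x // x ∈ c} => e ⟨x.1, hvc x.1 x.2⟩) with hEdef
  have hmemE : ∀ w : Fin n, w ∈ E ↔ ∃ (x : V) (hx : x ∈ c), e ⟨x, hvc x hx⟩ = w := by
    intro w
    rw [hEdef]
    simp only [Finset.mem_image, Finset.mem_attach, true_and]
    constructor
    · rintro ⟨x, hxw⟩
      exact ⟨x.1, x.2, hxw⟩
    · rintro ⟨x, hx, hxw⟩
      exact ⟨⟨x, hx⟩, hxw⟩
  have hEdom : (↑E : Set (Fin n)) ⊆ domSet H := by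
    intro w hw
    obtain ⟨x, hx, rfl⟩ := (hmemE w).1 hw
    intro w' hw'
    have hne : (↑(e.symm w') : V) ≠ x := by
      intro h'
      apply hw'
      have h2 : e.symm w' = ⟨x, hvc x hx⟩ := Subtype.ext h'
      rw [← h2, RelIso.apply_symm_apply]
    have hadj : J.Adj x ↑(e.symm w') := (hJc hx).2 ↑(e.symm w') (e.symm w').2 hne
    have h3 : H.Adj (e ⟨x, hvc x hx⟩) (e (e.symm w')) := e.map_adj_iff.2 hadj
    rwa [RelIso.apply_symm_apply] at h3
  have hEcard : E.card = c.card := by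
    rw [hEdef, Finset.card_image_of_injective _ hinj0, Finset.card_attach]
  let f : ↥(phiSub G c J).verts → ((↑E : Set (Fin n))ᶜ : Set (Fin n)) := fun a =>
    ⟨e ⟨↑↑a, a.2.1⟩, by
      intro hmem
      obtain ⟨x, hx', hx⟩ := (hmemE _).1 hmem
      have h1 := e.injective hx
      exact a.2.2 (by rw [← congrArg (fun t : ↥J.verts => (t : V)) h1]; exact hx')⟩
  have hfinj : Function.Injective f := by
    intro a b hab
    have h1 := e.injective (Subtype.ext_iff.1 hab)
    exact Subtype.ext (Subtype.ext (congrArg (fun t : ↥J.verts => (t : V)) h1))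
  have hfsurj : Function.Surjective f := by
    intro w
    have hwE : (↑w : Fin n) ∉ E := w.2
    have hznc : (↑(e.symm ↑w) : V) ∉ c := by
      intro h'
      apply hwE
      refine (hmemE ↑w).2 ⟨↑(e.symm ↑w), h', ?_⟩
      rw [Subtype.coe_eta, RelIso.apply_symm_apply]
    have hzS : (↑(e.symm ↑w) : V) ∈ commonNbhd G c :=
      mem_commonNbhd_of_dom hJc (e.symm ↑w).2 hznc
    refine ⟨⟨⟨↑(e.symm ↑w), hzS⟩, ⟨(e.symm ↑w).2, hznc⟩⟩, ?_⟩
    apply Subtype.ext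
    show (e ⟨(↑(e.symm ↑w) : V), (e.symm ↑w).2⟩ : Fin n) = ↑w
    rw [Subtype.coe_eta, RelIso.apply_symm_apply]
  refine ⟨E, hEdom, hEcard, ⟨⟨Equiv.ofBijective f ⟨hfinj, hfsurj⟩, ?_⟩⟩⟩
  intro a b
  show H.Adj (e ⟨↑↑a, a.2.1⟩) (e ⟨↑↑b, b.2.1⟩) ↔ (phiSub G c J).Adj ↑a ↑b
  constructor
  · intro hadj
    exact ⟨e.map_adj_iff.1 hadj, a.2.2, b.2.2⟩
  · rintro ⟨h1, -, -⟩
    exact e.map_adj_iff.2 h1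

lemma psiSub_memS {hc : G.IsClique (↑c : Set V)} {J' : (G.induce (commonNbhd G c)).Subgraph}
    (v : ↥(psiSub G c hc J').verts) (hv : (↑v : V) ∉ c) : (↑v : V) ∈ commonNbhd G c := by
  have h2 : (↑v : V) ∈ (↑c : Set V) ∪ Subtype.val '' J'.verts := v.2
  rcases h2 with h1 | ⟨z, hz, hzv⟩
  · exact absurd h1 hv
  · rw [← hzv]; exact z.2

lemma psiSub_memJ {hc : G.IsClique (↑c : Set V)} {J' : (G.induce (commonNbhd G c)).Subgraph}
    (v : ↥(psiSub G c hc J').verts) (hv : (↑v : V) ∉ c)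
    (hS : (↑v : V) ∈ commonNbhd G c) : (⟨↑v, hS⟩ : ↥(commonNbhd G c)) ∈ J'.verts := by
  have h2 : (↑v : V) ∈ (↑c : Set V) ∪ Subtype.val '' J'.verts := v.2
  rcases h2 with h1 | h1
  · exact absurd h1 hv
  · exact mem_image_subtype h1 hS

lemma c_subset_subDomSet_psiSub (hc : G.IsClique (↑c : Set V))
    (J' : (G.induce (commonNbhd G c)).Subgraph) : ↑c ⊆ subDomSet (psiSub G c hc J') := by
  intro x hx
  refine ⟨Or.inl hx, ?_⟩
  intro w hw hne
  exact ⟨Ne.symm hne, Or.inl hx, hw, Or.inl hx⟩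

lemma phiSub_psiSub (hc : G.IsClique (↑c : Set V))
    (J' : (G.induce (commonNbhd G c)).Subgraph) : phiSub G c (psiSub G c hc J') = J' := by
  apply SimpleGraph.Subgraph.ext
  · ext x
    constructor
    · rintro ⟨h1, h2⟩
      have h3 : (↑x : V) ∈ (↑c : Set V) ∪ Subtype.val '' J'.verts := h1
      rcases h3 with h4 | h4
      · exact absurd h4 h2
      · have h5 := mem_image_subtype h4 x.2
        rwa [Subtype.coe_eta] at h5
    · intro hx
      exact ⟨Or.inr ⟨x, hx, rfl⟩, not_mem_c_of_mem_commonNbhd x.2⟩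
  · ext x y
    constructor
    · rintro ⟨⟨hne, hxv, hyv, (h1 | h1 | ⟨ha, hb, hadj⟩)⟩, hxc, hyc⟩
      · exact absurd h1 hxc
      · exact absurd h1 hyc
      · rwa [Subtype.coe_eta, Subtype.coe_eta] at hadj
    · intro hadj
      refine ⟨⟨fun h' => hadj.ne (Subtype.ext h'), Or.inr ⟨x, J'.edge_vert hadj, rfl⟩,
        Or.inr ⟨y, J'.edge_vert hadj.symm, rfl⟩,
        Or.inr (Or.inr ⟨x.2, y.2, ?_⟩)⟩,
        not_mem_c_of_mem_commonNbhd x.2, not_mem_c_of_mem_commonNbhd y.2⟩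
      rwa [Subtype.coe_eta, Subtype.coe_eta]

lemma phiSub_le_of_eq {J₁ J₂ : G.Subgraph} (h₁ : ↑c ⊆ subDomSet J₁) (h₂ : ↑c ⊆ subDomSet J₂)
    (heq : phiSub G c J₁ = phiSub G c J₂) : J₁ ≤ J₂ := by
  have hverts : J₁.verts ⊆ J₂.verts := by
    intro v hv
    by_cases hvc : v ∈ c
    · exact (h₂ hvc).1
    · have hS : v ∈ commonNbhd G c := mem_commonNbhd_of_dom h₁ hv hvc
      have h3 : (⟨v, hS⟩ : ↥(commonNbhd G c)) ∈ (phiSub G c J₁).verts := ⟨hv, hvc⟩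
      rw [heq] at h3
      exact h3.1
  refine ⟨hverts, ?_⟩
  intro a b hab
  by_cases hac : a ∈ c
  · exact (h₂ hac).2 b (hverts (J₁.edge_vert hab.symm)) (J₁.adj_sub hab).ne'
  · by_cases hbc : b ∈ c
    · exact ((h₂ hbc).2 a (hverts (J₁.edge_vert hab)) (J₁.adj_sub hab).ne).symm
    · have haS : a ∈ commonNbhd G c := mem_commonNbhd_of_dom h₁ (J₁.edge_vert hab) hac
      have hbS : b ∈ commonNbhd G c := mem_commonNbhd_of_dom h₁ (J₁.edge_vert hab.symm) hbc
      have h3 : (phiSub G c J₁).Adj ⟨a, haS⟩ ⟨b, hbS⟩ := ⟨hab, hac, hbc⟩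
      rw [heq] at h3
      exact h3.1

lemma psi_iso {n : ℕ} {H : SimpleGraph (Fin n)} (hc : G.IsClique (↑c : Set V))
    (D : Finset (Fin n)) (hD : ↑D ⊆ domSet H) (hcard : c.card = D.card)
    {J' : (G.induce (commonNbhd G c)).Subgraph}
    (e : J'.coe ≃g H.induce ((↑D : Set (Fin n))ᶜ)) :
    Nonempty ((psiSub G c hc J').coe ≃g H) := by
  classical
  let ec : ↥c ≃ ↥D := Finset.equivOfCardEq hcard
  let f : ↥(psiSub G c hc J').verts → Fin n := fun v =>
    if hv : (↑v : V) ∈ c then ↑(ec ⟨↑v, hv⟩)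
    else ↑(e ⟨⟨↑v, psiSub_memS v hv⟩, psiSub_memJ v hv _⟩)
  have hfpos : ∀ (v : ↥(psiSub G c hc J').verts) (hv : (↑v : V) ∈ c), f v = ↑(ec ⟨↑v, hv⟩) := fun v hv => dif_pos hv
  have hfneg : ∀ (v : ↥(psiSub G c hc J').verts) (hv : (↑v : V) ∉ c),
      f v = ↑(e ⟨⟨↑v, psiSub_memS v hv⟩, psiSub_memJ v hv _⟩) := fun v hv => dif_neg hv
  have hfD : ∀ (v : ↥(psiSub G c hc J').verts) (hv : (↑v : V) ∈ c), f v ∈ D := by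
    intro v hv; rw [hfpos v hv]; exact (ec ⟨↑v, hv⟩).2
  have hfD' : ∀ (v : ↥(psiSub G c hc J').verts) (hv : (↑v : V) ∉ c), f v ∉ D := by
    intro v hv; rw [hfneg v hv]
    exact (e ⟨⟨↑v, psiSub_memS v hv⟩, psiSub_memJ v hv _⟩).2
  have hfinj : Function.Injective f := by
    intro a b hab
    by_cases ha : (↑a : V) ∈ c <;> by_cases hb : (↑b : V) ∈ c
    · rw [hfpos a ha, hfpos b hb] at hab
      have h1 := ec.injective (Subtype.ext hab)
      exact Subtype.ext (congrArg (fun t : ↥c => (t : V)) h1)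
    · exact absurd (hab ▸ hfD a ha) (hfD' b hb)
    · exact absurd (hab ▸ hfD' a ha) (fun h' => h' (hfD b hb))
    · rw [hfneg a ha, hfneg b hb] at hab
      have h1 := e.injective (Subtype.ext hab)
      exact Subtype.ext (congrArg (fun t : ↥J'.verts => ((t : ↥(commonNbhd G c)) : V)) h1)
  have hfsurj : Function.Surjective f := by
    intro w
    by_cases hw : w ∈ D
    · refine ⟨⟨↑(ec.symm ⟨w, hw⟩), Or.inl (ec.symm ⟨w, hw⟩).2⟩, ?_⟩
      rw [hfpos _ (ec.symm ⟨w, hw⟩).2]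
      show (↑(ec ⟨↑(ec.symm ⟨w, hw⟩), (ec.symm ⟨w, hw⟩).2⟩) : Fin n) = w
      rw [Subtype.coe_eta, Equiv.apply_symm_apply]
    · have hw' : w ∈ ((↑D : Set (Fin n))ᶜ) := hw
      obtain ⟨z, hz⟩ : ∃ z : ↥(psiSub G c hc J').verts, (↑z : V) = ↑↑(e.symm ⟨w, hw'⟩) :=
        ⟨⟨↑↑(e.symm ⟨w, hw'⟩), Or.inr ⟨↑(e.symm ⟨w, hw'⟩), (e.symm ⟨w, hw'⟩).2, rfl⟩⟩, rfl⟩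
      have hncz : (↑z : V) ∉ c := by
        rw [hz]
        exact not_mem_c_of_mem_commonNbhd (↑(e.symm ⟨w, hw'⟩) : ↥(commonNbhd G c)).2
      refine ⟨z, ?_⟩
      rw [hfneg z hncz]
      have harg : (⟨⟨↑z, psiSub_memS z hncz⟩, psiSub_memJ z hncz _⟩ :
          ↥J'.verts) = e.symm ⟨w, hw'⟩ := Subtype.ext (Subtype.ext hz)
      rw [harg, RelIso.apply_symm_apply]
  refine ⟨⟨Equiv.ofBijective f ⟨hfinj, hfsurj⟩, ?_⟩⟩
  intro a b
  show H.Adj (f a) (f b) ↔ (psiSub G c hc J').Adj ↑a ↑b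
  have hRHS : (psiSub G c hc J').Adj ↑a ↑b ↔ ((↑a : V) ≠ ↑b ∧ ((↑a : V) ∈ c ∨ (↑b : V) ∈ c ∨
      ∃ (ha : (↑a : V) ∈ commonNbhd G c) (hb : (↑b : V) ∈ commonNbhd G c),
        J'.Adj ⟨↑a, ha⟩ ⟨↑b, hb⟩)) := by
    constructor
    · rintro ⟨h1, -, -, h4⟩; exact ⟨h1, h4⟩
    · rintro ⟨h1, h4⟩; exact ⟨h1, a.2, b.2, h4⟩
  rw [hRHS]
  by_cases ha : (↑a : V) ∈ c
  · by_cases hb : (↑b : V) ∈ c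
    · rw [hfpos a ha, hfpos b hb]
      have hda : (↑(ec ⟨↑a, ha⟩) : Fin n) ∈ domSet H := hD (ec ⟨↑a, ha⟩).2
      rw [domSet_adj_iff hda]
      constructor
      · intro hne
        refine ⟨fun heq => hne ?_, Or.inl ha⟩
        rw [show (⟨(↑a : V), ha⟩ : ↥c) = ⟨(↑b : V), hb⟩ from Subtype.ext heq]
      · rintro ⟨h1, -⟩ heq
        exact h1 (congrArg (fun t : ↥c => (t : V)) (ec.injective (Subtype.ext heq.symm)))
    · rw [hfpos a ha, hfneg b hb]
      have hda : (↑(ec ⟨↑a, ha⟩) : Fin n) ∈ domSet H := hD (ec ⟨↑a, ha⟩).2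
      rw [domSet_adj_iff hda]
      apply iff_of_true
      · intro heq
        exact (e ⟨⟨↑b, psiSub_memS b hb⟩, psiSub_memJ b hb _⟩).2 (heq ▸ (ec ⟨↑a, ha⟩).2)
      · exact ⟨fun heq => hb (heq ▸ ha), Or.inl ha⟩
  · by_cases hb : (↑b : V) ∈ c
    · rw [hfneg a ha, hfpos b hb]
      have hdb : (↑(ec ⟨↑b, hb⟩) : Fin n) ∈ domSet H := hD (ec ⟨↑b, hb⟩).2
      rw [H.adj_comm, domSet_adj_iff hdb]
      apply iff_of_true
      · intro heq
        exact (e ⟨⟨↑a, psiSub_memS a ha⟩, psiSub_memJ a ha _⟩).2 (heq ▸ (ec ⟨↑b, hb⟩).2)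
      · exact ⟨fun heq => ha (by rw [heq]; exact hb), Or.inr (Or.inl hb)⟩
    · rw [hfneg a ha, hfneg b hb]
      constructor
      · intro hadj
        have h1 : J'.Adj ⟨↑a, psiSub_memS a ha⟩ ⟨↑b, psiSub_memS b hb⟩ := e.map_adj_iff.1 hadj
        exact ⟨fun heq => h1.ne (Subtype.ext heq), Or.inr (Or.inr ⟨_, _, h1⟩)⟩
      · rintro ⟨h1, (h | h | ⟨ha', hb', hadj⟩)⟩
        · exact absurd h ha
        · exact absurd h hb
        · exact e.map_adj_iff.2 hadj

end Aux

/-- `N_c(H,G) = N(H^{↓u}, G[N(c)])` for any `u`-clique `c`. -/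
theorem stmt8 {h : ℕ} (H : SimpleGraph (Fin h)) (u : ℕ) (hu : 1 ≤ u)
    (hdom : u ≤ domCount H) (D : Finset (Fin h)) (hD : ↑D ⊆ domSet H) (hDcard : D.card = u)
    {V : Type*} [Fintype V] (G : SimpleGraph V) (c : Finset V) (hc : G.IsNClique u c) :
    {J : G.Subgraph | Nonempty (J.coe ≃g H) ∧ ↑c ⊆ subDomSet J}.ncard =
      _root_.copyCount (H.induce ((↑D : Set (Fin h))ᶜ)) (G.induce (commonNbhd G c)) := by
  classical
  have hclique : G.IsClique (↑c : Set V) := hc.1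
  have hccard : c.card = u := hc.2
  have hinj : Set.InjOn (phiSub G c)
      {J : G.Subgraph | Nonempty (J.coe ≃g H) ∧ ↑c ⊆ subDomSet J} :=
    fun J₁ h₁ J₂ h₂ heq =>
      le_antisymm (phiSub_le_of_eq h₁.2 h₂.2 heq) (phiSub_le_of_eq h₂.2 h₁.2 heq.symm)
  have himg : phiSub G c '' {J : G.Subgraph | Nonempty (J.coe ≃g H) ∧ ↑c ⊆ subDomSet J} =
      {J' : (G.induce (commonNbhd G c)).Subgraph |
        Nonempty (J'.coe ≃g H.induce ((↑D : Set (Fin h))ᶜ))} := by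
    ext J'
    constructor
    · rintro ⟨J, ⟨⟨e⟩, hJc⟩, rfl⟩
      obtain ⟨E, hEdom, hEcard, ⟨iso1⟩⟩ := phi_iso hJc e
      obtain ⟨iso2⟩ := deletion_iso H E D hEdom hD (by rw [hEcard, hccard, hDcard])
      exact ⟨iso1.trans iso2⟩
    · rintro ⟨e⟩
      exact ⟨psiSub G c hclique J', ⟨psi_iso hclique D hD (by rw [hccard, hDcard]) e,
        c_subset_subDomSet_psiSub hclique J'⟩, phiSub_psiSub hclique J'⟩
  have hcc : _root_.copyCount (H.induce ((↑D : Set (Fin h))ᶜ)) (G.induce (commonNbhd G c)) =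
      ({J' : (G.induce (commonNbhd G c)).Subgraph |
        Nonempty (J'.coe ≃g H.induce ((↑D : Set (Fin h))ᶜ))}).ncard := rfl
  rw [hcc, ← himg, Set.ncard_image_of_injOn hinj]
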